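/- Let G be a 2-connected K_{1,4}-free split graph with maximum clique K, independent set I, |K| ≥ |I| ≥ 8, Δ^I = 3, with v ∈ K having |N(v)∩I| = 3, and suppose G has no short cycles. Then the collection 𝕮 of maximal alternating paths in G − N^I(v) (as given by the Δ^I ≤ 2 construction) contains no path on 13 or more vertices. -/

import Mathlib

open SimpleGraph

variable {V : Type*}

/-- `I` is an independent set in `G`. -/
def IndepOn (G : SimpleGraph V) (I : Set V) : Prop :=
  ∀ ⦃u⦄, u ∈ I → ∀ ⦃v⦄, v ∈ I → ¬ G.Adj u v

/-- `(K, I)` is a split partition of `G`: `K` a clique, `I` independent,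
partitioning the vertex set. -/
def SplitPartition (G : SimpleGraph V) (K I : Set V) : Prop :=
  Disjoint K I ∧ K ∪ I = Set.univ ∧ G.IsClique K ∧ IndepOn G I

/-- `K` is a maximum clique of `G`. -/
def MaxClique (G : SimpleGraph V) (K : Set V) : Prop :=
  G.IsClique K ∧ ∀ K' : Set V, G.IsClique K' → K'.ncard ≤ K.ncard

/-- `G` has no induced copy of the star `K_{1,n}` (center plus `n` pairwise
nonadjacent leaves). -/
def StarFree (G : SimpleGraph V) (n : ℕ) : Prop :=
  ¬ ∃ (c : V) (L : Finset V), L.card = n ∧ c ∉ L ∧ (∀ l ∈ L, G.Adj c l) ∧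
      (∀ l ∈ L, ∀ m ∈ L, l ≠ m → ¬ G.Adj l m)

/-- `G` is 2-connected: at least 3 vertices and deleting any single vertex
leaves a connected graph. -/
def TwoConnected (G : SimpleGraph V) [Fintype V] : Prop :=
  3 ≤ Fintype.card V ∧ ∀ v : V, (G.induce (({v} : Set V)ᶜ)).Connected

/-- The bipartite subgraph `H` of `G` on `V_a = {u ∈ I : deg u = 2}` and
`V_b = N(V_a)`: its edges are exactly the edges of `G` incident to a degree-2
vertex of `I`. -/
def shortSub (G : SimpleGraph V) (I : Set V) : SimpleGraph V where
  Adj x y := G.Adj x y ∧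
    ((x ∈ I ∧ (G.neighborSet x).ncard = 2) ∨ (y ∈ I ∧ (G.neighborSet y).ncard = 2))
  symm := ⟨fun x y h => ⟨h.1.symm, h.2.symm⟩⟩
  loopless := ⟨fun x h => G.irrefl h.1⟩

/-- `G` has a short cycle: an induced cycle in the bipartite subgraph
`shortSub G I` missing at least one vertex of `K`. -/
def HasShortCycle (G : SimpleGraph V) (K I : Set V) : Prop :=
  ∃ (n : ℕ) (f : cycleGraph n ↪g shortSub G I), 3 ≤ n ∧ ∃ k ∈ K, k ∉ Set.range ⇑f

/-- `(w, x)` describes an alternating path `w 0, x 0, w 1, x 1, …, w (j-1)`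
in `G - A` with the `j` vertices `w i` in `K` and the `j - 1` vertices `x i`
in `I`, all distinct and avoiding `A`. -/
def IsAltPath (G : SimpleGraph V) (K I A : Set V) (j : ℕ) (w x : ℕ → V) : Prop :=
  2 ≤ j ∧
  (∀ i < j, w i ∈ K ∧ w i ∉ A) ∧
  (∀ i < j - 1, x i ∈ I ∧ x i ∉ A) ∧
  (∀ i < j, ∀ k < j, w i = w k → i = k) ∧
  (∀ i < j - 1, ∀ k < j - 1, x i = x k → i = k) ∧
  (∀ i < j, ∀ k < j - 1, w i ≠ x k) ∧
  (∀ i < j - 1, G.Adj (w i) (x i) ∧ G.Adj (w (i + 1)) (x i))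

/-- The vertex set of the alternating path `(w, x)` with `j` clique vertices. -/
def altPathVerts (j : ℕ) (w x : ℕ → V) : Set V :=
  {u | ∃ i < j, u = w i} ∪ {u | ∃ i < j - 1, u = x i}


private lemma star4_aux {V : Type*} [DecidableEq V] {G : SimpleGraph V}
    (hfree : StarFree G 4) {c l1 l2 l3 l4 : V}
    (h12 : l1 ≠ l2) (h13 : l1 ≠ l3) (h14 : l1 ≠ l4)
    (h23 : l2 ≠ l3) (h24 : l2 ≠ l4) (h34 : l3 ≠ l4)
    (hc1 : c ≠ l1) (hc2 : c ≠ l2) (hc3 : c ≠ l3) (hc4 : c ≠ l4)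
    (a1 : G.Adj c l1) (a2 : G.Adj c l2) (a3 : G.Adj c l3) (a4 : G.Adj c l4)
    (n12 : ¬ G.Adj l1 l2) (n13 : ¬ G.Adj l1 l3) (n14 : ¬ G.Adj l1 l4)
    (n23 : ¬ G.Adj l2 l3) (n24 : ¬ G.Adj l2 l4) (n34 : ¬ G.Adj l3 l4) : False := by
  apply hfree
  refine ⟨c, {l1, l2, l3, l4}, ?_, ?_, ?_, ?_⟩
  · rw [Finset.card_insert_of_notMem (by simp [h12, h13, h14]),
      Finset.card_insert_of_notMem (by simp [h23, h24]),
      Finset.card_insert_of_notMem (by simp [h34]), Finset.card_singleton]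
  · simp [hc1, hc2, hc3, hc4]
  · intro l hl
    simp only [Finset.mem_insert, Finset.mem_singleton] at hl
    rcases hl with rfl | rfl | rfl | rfl <;> assumption
  · intro l hl m hm hlm
    simp only [Finset.mem_insert, Finset.mem_singleton] at hl hm
    rcases hl with rfl | rfl | rfl | rfl <;> rcases hm with rfl | rfl | rfl | rfl <;>
      first
        | exact absurd rfl hlm
        | assumption
        | exact fun h => n12 h.symm
        | exact fun h => n13 h.symm
        | exact fun h => n14 h.symm
        | exact fun h => n23 h.symm
        | exact fun h => n24 h.symm
        | exact fun h => n34 h.symm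

/-- In a 2-connected `K_{1,4}`-free split graph with `|K| ≥ |I| ≥ 8`,
`Δ^I = 3` and no short cycles, there is no alternating path on 13 or more
vertices (i.e. with `j ≥ 7` clique vertices) in `G - N^I(v)`. -/
theorem no_path_on_thirteen_vertices [Fintype V] (G : SimpleGraph V)
    (K I : Set V) (hsplit : SplitPartition G K I) (hmax : MaxClique G K)
    (h2 : TwoConnected G) (hfree : StarFree G 4)
    (hI : 8 ≤ I.ncard) (hKI : I.ncard ≤ K.ncard)
    (hub : ∀ u ∈ K, (G.neighborSet u ∩ I).ncard ≤ 3)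
    (v : V) (hv : v ∈ K) (hdeg : (G.neighborSet v ∩ I).ncard = 3)
    (hshort : ¬ HasShortCycle G K I) :
    ¬ ∃ j, 7 ≤ j ∧ ∃ w x : ℕ → V,
        IsAltPath G K I (G.neighborSet v ∩ I) j w x := by
  classical
  rintro ⟨j, hj7, w, x, hj2, hwK, hxI, hwinj, hxinj, hwx, hadj⟩
  obtain ⟨hdisj, -, hclK, hindep⟩ := hsplit
  have hKI' : ∀ ⦃p⦄, p ∈ K → ∀ ⦃q⦄, q ∈ I → p ≠ q := by
    intro p hp q hq h
    exact Set.disjoint_left.mp hdisj hp (h ▸ hq)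
  -- every w i (with i < j - 1) differs from v
  have hwv : ∀ i, i < j - 1 → w i ≠ v := by
    intro i hi h
    have hadj' := (hadj i hi).1
    rw [h] at hadj'
    exact (hxI i hi).2 ⟨hadj', (hxI i hi).1⟩
  -- the three vertices of A = N(v) ∩ I
  obtain ⟨b1, b2, b3, hb12, hb13, hb23, hAeq⟩ := Set.ncard_eq_three.mp hdeg
  have hb1 : b1 ∈ G.neighborSet v ∩ I := by rw [hAeq]; simp
  have hb2 : b2 ∈ G.neighborSet v ∩ I := by rw [hAeq]; simp
  have hb3 : b3 ∈ G.neighborSet v ∩ I := by rw [hAeq]; simp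
  -- every vertex of K other than v is adjacent to some vertex of A
  have hstarv : ∀ p, p ∈ K → p ≠ v → ∃ a, a ∈ G.neighborSet v ∩ I ∧ G.Adj p a := by
    intro p hp hpv
    by_contra hcon
    push_neg at hcon
    exact star4_aux hfree hb12 hb13 (hKI' hp hb1.2).symm hb23 (hKI' hp hb2.2).symm
      (hKI' hp hb3.2).symm (hKI' hv hb1.2) (hKI' hv hb2.2) (hKI' hv hb3.2) hpv.symm
      hb1.1 hb2.1 hb3.1 (hclK hv hp hpv.symm)
      (hindep hb1.2 hb2.2) (hindep hb1.2 hb3.2) (fun h => hcon b1 hb1 h.symm)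
      (hindep hb2.2 hb3.2) (fun h => hcon b2 hb2 h.symm) (fun h => hcon b3 hb3 h.symm)
  -- no vertex of K has four distinct neighbours in I
  have hub4 : ∀ p, p ∈ K → ∀ y1 y2 y3 y4 : V, y1 ∈ I → y2 ∈ I → y3 ∈ I → y4 ∈ I →
      y1 ≠ y2 → y1 ≠ y3 → y1 ≠ y4 → y2 ≠ y3 → y2 ≠ y4 → y3 ≠ y4 →
      G.Adj p y1 → G.Adj p y2 → G.Adj p y3 → G.Adj p y4 → False := by
    intro p hp y1 y2 y3 y4 hI1 hI2 hI3 hI4 d12 d13 d14 d23 d24 d34 e1 e2 e3 e4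
    have hsub : ({y1, y2, y3, y4} : Set V) ⊆ G.neighborSet p ∩ I := by
      intro z hz
      rcases hz with rfl | rfl | rfl | hz
      · exact ⟨e1, hI1⟩
      · exact ⟨e2, hI2⟩
      · exact ⟨e3, hI3⟩
      · rw [Set.mem_singleton_iff] at hz; subst hz; exact ⟨e4, hI4⟩
    have h4 : ({y1, y2, y3, y4} : Set V).ncard = 4 := by
      rw [Set.ncard_insert_of_notMem (by simp [d12, d13, d14]) (Set.toFinite _),
        Set.ncard_insert_of_notMem (by simp [d23, d24]) (Set.toFinite _),
        Set.ncard_insert_of_notMem (by simp [d34]) (Set.toFinite _), Set.ncard_singleton]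
    have hle := Set.ncard_le_ncard hsub (Set.toFinite _)
    have := hub p hp
    omega
  -- choose, for each interior index, a neighbour of w m in A
  have hstarw : ∀ m, 1 ≤ m → m ≤ 5 →
      ∃ a, a ∈ G.neighborSet v ∩ I ∧ G.Adj (w m) a := by
    intro m h1 h5
    exact hstarv (w m) (hwK m (by omega)).1 (hwv m (by omega))
  have _nonemp : Nonempty V := ⟨v⟩
  choose! c hcA hcadj using hstarw
  -- the I-neighbourhood of w m is exactly {x (m-1), x m, c m}
  have hwxm1 : ∀ m, 1 ≤ m → m ≤ 5 → G.Adj (w m) (x (m - 1)) := by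
    intro m h1 h5
    have := (hadj (m - 1) (by omega)).2
    have e : m - 1 + 1 = m := by omega
    rwa [e] at this
  have hwxm : ∀ m, 1 ≤ m → m ≤ 5 → G.Adj (w m) (x m) := by
    intro m h1 h5
    exact (hadj m (by omega)).1
  have hN : ∀ m, 1 ≤ m → m ≤ 5 → ∀ y, y ∈ I → G.Adj (w m) y →
      y = x (m - 1) ∨ y = x m ∨ y = c m := by
    intro m h1 h5 y hy hadjy
    by_contra hcon
    push_neg at hcon
    refine hub4 (w m) (hwK m (by omega)).1 (x (m - 1)) (x m) (c m) y
      (hxI (m - 1) (by omega)).1 (hxI m (by omega)).1 (hcA m h1 h5).2 hy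
      ?_ ?_ (Ne.symm hcon.1) ?_ (Ne.symm hcon.2.1) (Ne.symm hcon.2.2)
      (hwxm1 m h1 h5) (hwxm m h1 h5) (hcadj m h1 h5) hadjy
    · intro h
      have := hxinj (m - 1) (by omega) m (by omega) h
      omega
    · intro h
      exact (hxI (m - 1) (by omega)).2 (h ▸ hcA m h1 h5)
    · intro h
      exact (hxI m (by omega)).2 (h ▸ hcA m h1 h5)
  -- case 1: two interior indices at distance ≥ 2 with different A-neighbours
  have hnadj : ∀ m k, 1 ≤ m → m ≤ 5 → 1 ≤ k → k ≤ 5 →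
      (m + 2 ≤ k ∨ k + 2 ≤ m) → c m ≠ c k → False := by
    intro m k hm1 hm5 hk1 hk5 hgap hne
    have hwmK := (hwK m (by omega)).1
    have hwkK := (hwK k (by omega)).1
    have n1 : ¬ G.Adj (w k) (x (m - 1)) := by
      intro h
      rcases hN k hk1 hk5 _ (hxI (m - 1) (by omega)).1 h with h' | h' | h'
      · have := hxinj (m - 1) (by omega) (k - 1) (by omega) h'; omega
      · have := hxinj (m - 1) (by omega) k (by omega) h'; omega
      · exact (hxI (m - 1) (by omega)).2 (h' ▸ hcA k hk1 hk5)
    have n2 : ¬ G.Adj (w k) (x m) := by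
      intro h
      rcases hN k hk1 hk5 _ (hxI m (by omega)).1 h with h' | h' | h'
      · have := hxinj m (by omega) (k - 1) (by omega) h'; omega
      · have := hxinj m (by omega) k (by omega) h'; omega
      · exact (hxI m (by omega)).2 (h' ▸ hcA k hk1 hk5)
    have n3 : ¬ G.Adj (w k) (c m) := by
      intro h
      rcases hN k hk1 hk5 _ (hcA m hm1 hm5).2 h with h' | h' | h'
      · exact (hxI (k - 1) (by omega)).2 (h' ▸ hcA m hm1 hm5)
      · exact (hxI k (by omega)).2 (h' ▸ hcA m hm1 hm5)
      · exact hne h'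
    have hwmk : w m ≠ w k := by
      intro h
      have := hwinj m (by omega) k (by omega) h
      omega
    exact star4_aux hfree
      (by intro h; have := hxinj (m - 1) (by omega) m (by omega) h; omega)
      (fun h => (hxI (m - 1) (by omega)).2 (by rw [h]; exact hcA m hm1 hm5))
      (hwx k (by omega) (m - 1) (by omega)).symm
      (fun h => (hxI m (by omega)).2 (by rw [h]; exact hcA m hm1 hm5))
      (hwx k (by omega) m (by omega)).symm
      (hKI' hwkK (hcA m hm1 hm5).2).symm
      (hwx m (by omega) (m - 1) (by omega))
      (hwx m (by omega) m (by omega))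
      (hKI' hwmK (hcA m hm1 hm5).2)
      hwmk
      (hwxm1 m hm1 hm5) (hwxm m hm1 hm5) (hcadj m hm1 hm5) (hclK hwmK hwkK hwmk)
      (hindep (hxI (m - 1) (by omega)).1 (hxI m (by omega)).1)
      (hindep (hxI (m - 1) (by omega)).1 (hcA m hm1 hm5).2)
      (fun h => n1 h.symm)
      (hindep (hxI m (by omega)).1 (hcA m hm1 hm5).2)
      (fun h => n2 h.symm)
      (fun h => n3 h.symm)
  by_cases e13 : c 1 = c 3
  swap
  · exact hnadj 1 3 (by omega) (by omega) (by omega) (by omega) (by omega) e13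
  by_cases e15 : c 1 = c 5
  swap
  · exact hnadj 1 5 (by omega) (by omega) (by omega) (by omega) (by omega) e15
  -- case 2: c 1 = c 3 = c 5 =: a
  have hc1A := hcA 1 (by omega) (by omega)
  by_cases hall : ∀ u ∈ K, G.Adj u (c 1)
  · -- then K ∪ {c 1} is a bigger clique
    have hclq : G.IsClique (insert (c 1) K) := by
      intro p hp q hq hne
      rcases Set.mem_insert_iff.mp hp with rfl | hp'
      · rcases Set.mem_insert_iff.mp hq with rfl | hq'
        · exact absurd rfl hne
        · exact (hall q hq').symm
      · rcases Set.mem_insert_iff.mp hq with rfl | hq'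
        · exact hall p hp'
        · exact hclK hp' hq' hne
    have hnotmem : c 1 ∉ K := fun h => hKI' h hc1A.2 rfl
    have hle := hmax.2 _ hclq
    rw [Set.ncard_insert_of_notMem hnotmem (Set.toFinite _)] at hle
    omega
  push_neg at hall
  obtain ⟨u, huK, hua⟩ := hall
  have huv : u ≠ v := by
    intro h
    subst h
    exact hua hc1A.1
  obtain ⟨a', ha'A, hua'⟩ := hstarv u huK huv
  have ha'ne : a' ≠ c 1 := fun h => hua (h ▸ hua')
  -- the second star, at a suitable interior vertex
  have star2 : ∀ m, 1 ≤ m → m ≤ 5 → G.Adj (w m) (c 1) →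
      ¬ G.Adj u (x (m - 1)) → ¬ G.Adj u (x m) → False := by
    intro m hm1 hm5 hadj1 hn1 hn2
    have hwmK := (hwK m (by omega)).1
    have humw : u ≠ w m := by
      intro h
      rw [h] at hua
      exact hua hadj1
    exact star4_aux hfree
      (by intro h; have := hxinj (m - 1) (by omega) m (by omega) h; omega)
      (fun h => (hxI (m - 1) (by omega)).2 (by rw [h]; exact hc1A))
      (hKI' huK (hxI (m - 1) (by omega)).1).symm
      (fun h => (hxI m (by omega)).2 (by rw [h]; exact hc1A))
      (hKI' huK (hxI m (by omega)).1).symm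
      (hKI' huK hc1A.2).symm
      (hwx m (by omega) (m - 1) (by omega))
      (hwx m (by omega) m (by omega))
      (hKI' hwmK hc1A.2)
      humw.symm
      (hwxm1 m hm1 hm5) (hwxm m hm1 hm5) hadj1 (hclK hwmK huK humw.symm)
      (hindep (hxI (m - 1) (by omega)).1 (hxI m (by omega)).1)
      (hindep (hxI (m - 1) (by omega)).1 hc1A.2)
      (fun h => hn1 h.symm)
      (hindep (hxI m (by omega)).1 hc1A.2)
      (fun h => hn2 h.symm)
      (fun h => hua h.symm)
  -- pigeonhole: u cannot be adjacent to an x in each of the three pairs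
  have h3x : ∀ i k l : ℕ, i < k → k < l → l ≤ 5 →
      G.Adj u (x i) → G.Adj u (x k) → G.Adj u (x l) → False := by
    intro i k l hik hkl hl5 e1 e2 e3
    refine hub4 u huK (x i) (x k) (x l) a'
      (hxI i (by omega)).1 (hxI k (by omega)).1 (hxI l (by omega)).1 ha'A.2
      ?_ ?_ (fun h => (hxI i (by omega)).2 (h ▸ ha'A)) ?_
      (fun h => (hxI k (by omega)).2 (h ▸ ha'A))
      (fun h => (hxI l (by omega)).2 (h ▸ ha'A)) e1 e2 e3 hua'
    · intro h; have := hxinj i (by omega) k (by omega) h; omega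
    · intro h; have := hxinj i (by omega) l (by omega) h; omega
    · intro h; have := hxinj k (by omega) l (by omega) h; omega
  by_cases q1 : G.Adj u (x 0) ∨ G.Adj u (x 1)
  · by_cases q2 : G.Adj u (x 2) ∨ G.Adj u (x 3)
    · by_cases q3 : G.Adj u (x 4) ∨ G.Adj u (x 5)
      · rcases q1 with q1 | q1 <;> rcases q2 with q2 | q2 <;> rcases q3 with q3 | q3
        · exact h3x 0 2 4 (by omega) (by omega) (by omega) q1 q2 q3
        · exact h3x 0 2 5 (by omega) (by omega) (by omega) q1 q2 q3
        · exact h3x 0 3 4 (by omega) (by omega) (by omega) q1 q2 q3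
        · exact h3x 0 3 5 (by omega) (by omega) (by omega) q1 q2 q3
        · exact h3x 1 2 4 (by omega) (by omega) (by omega) q1 q2 q3
        · exact h3x 1 2 5 (by omega) (by omega) (by omega) q1 q2 q3
        · exact h3x 1 3 4 (by omega) (by omega) (by omega) q1 q2 q3
        · exact h3x 1 3 5 (by omega) (by omega) (by omega) q1 q2 q3
      · push_neg at q3
        exact star2 5 (by omega) (by omega) (e15 ▸ hcadj 5 (by omega) (by omega)) q3.1 q3.2
    · push_neg at q2
      exact star2 3 (by omega) (by omega) (e13 ▸ hcadj 3 (by omega) (by omega)) q2.1 q2.2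
  · push_neg at q1
    exact star2 1 (by omega) (by omega) (hcadj 1 (by omega) (by omega)) q1.1 q1.2
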